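/- Fix an integer N ≥ 1 and the triangulation T of [0,1]² described in the context, and let t ∈ (0,1). Set ω = (t, (1−t)/2, (1−t)/2), L = {z ∈ Δ² : z_1 = t, z_2 ≤ (1−t)/2}, and R = {z ∈ Δ² : z_1 = t, z_2 ≥ (1−t)/2}. Let f : [0,1]² → Δ² be T-piecewise affine, vertically monotone at every x = k/N (k ∈ {0,…,N}), with f_1(v) ≠ t for every grid vertex v. If S is a basic square such that f(∂S) intersects both L and R, then ω belongs to f(S). -/

import Mathlib

set_option maxHeartbeats 1000000


/-- The lower-left triangle of the basic square with bottom-left corner `(k/N, l/N)`,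
cut off by the diagonal from the top-left corner to the bottom-right corner. -/
def lowerTri (N k l : ℕ) : Set (ℝ × ℝ) :=
  {p | (k : ℝ) / N ≤ p.1 ∧ (l : ℝ) / N ≤ p.2 ∧ p.1 + p.2 ≤ ((k : ℝ) + l + 1) / N}

/-- The upper-right triangle of the basic square with bottom-left corner `(k/N, l/N)`,
cut off by the diagonal from the top-left corner to the bottom-right corner. -/
def upperTri (N k l : ℕ) : Set (ℝ × ℝ) :=
  {p | p.1 ≤ ((k : ℝ) + 1) / N ∧ p.2 ≤ ((l : ℝ) + 1) / N ∧ ((k : ℝ) + l + 1) / N ≤ p.1 + p.2}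

/-- `f` is piecewise affine with respect to the triangulation `T` of `[0,1]²` obtained by
cutting each of the `N²` basic squares along the diagonal joining its top-left corner to its
bottom-right corner: `f` agrees with an affine map on each triangle of `T`. -/
def IsPWAffine (N : ℕ) (f : ℝ × ℝ → Fin 3 → ℝ) : Prop :=
  ∀ k l : ℕ, k < N → l < N →
    (∃ g : (ℝ × ℝ) →ᵃ[ℝ] (Fin 3 → ℝ), ∀ p ∈ lowerTri N k l, f p = g p) ∧
    (∃ g : (ℝ × ℝ) →ᵃ[ℝ] (Fin 3 → ℝ), ∀ p ∈ upperTri N k l, f p = g p)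

/-- The basic square with bottom-left corner `(k/N, l/N)`. -/
def basicSquare (N k l : ℕ) : Set (ℝ × ℝ) :=
  Set.Icc ((k : ℝ) / N) (((k : ℝ) + 1) / N) ×ˢ Set.Icc ((l : ℝ) / N) (((l : ℝ) + 1) / N)

/-- The left half `L` of the segment `{z ∈ Δ² : z₁ = t}`, i.e. the part with
`z₂ ≤ (1−t)/2`. -/
def leftHalf (t : ℝ) : Set (Fin 3 → ℝ) :=
  {z | z ∈ stdSimplex ℝ (Fin 3) ∧ z 0 = t ∧ z 1 ≤ (1 - t) / 2}

/-- The right half `R` of the segment `{z ∈ Δ² : z₁ = t}`, i.e. the part with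
`z₂ ≥ (1−t)/2`. -/
def rightHalf (t : ℝ) : Set (Fin 3 → ℝ) :=
  {z | z ∈ stdSimplex ℝ (Fin 3) ∧ z 0 = t ∧ (1 - t) / 2 ≤ z 1}

section Aux

lemma combo_le {a b u x y : ℝ} (ha : 0 ≤ a) (hb : 0 ≤ b) (hab : a + b = 1)
    (hx : u ≤ x) (hy : u ≤ y) : u ≤ a*x + b*y := by
  have h1 := mul_le_mul_of_nonneg_left hx ha
  have h2 := mul_le_mul_of_nonneg_left hy hb
  have h3 : a*u + b*u = u := by rw [← add_mul, hab, one_mul]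
  linarith

lemma combo_ge {a b u x y : ℝ} (ha : 0 ≤ a) (hb : 0 ≤ b) (hab : a + b = 1)
    (hx : x ≤ u) (hy : y ≤ u) : a*x + b*y ≤ u := by
  have h1 := mul_le_mul_of_nonneg_left hx ha
  have h2 := mul_le_mul_of_nonneg_left hy hb
  have h3 : a*u + b*u = u := by rw [← add_mul, hab, one_mul]
  linarith

lemma convex_lowerTri (N k l : ℕ) : Convex ℝ (lowerTri N k l) := by
  intro p hp q hq a b ha hb hab
  obtain ⟨h1, h2, h3⟩ := hp
  obtain ⟨h4, h5, h6⟩ := hq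
  refine ⟨?_, ?_, ?_⟩ <;>
    simp only [Prod.fst_add, Prod.snd_add, Prod.smul_fst, Prod.smul_snd, smul_eq_mul]
  · exact combo_le ha hb hab h1 h4
  · exact combo_le ha hb hab h2 h5
  · have h := combo_ge ha hb hab h3 h6
    have h' : a*(p.1+p.2) + b*(q.1+q.2) = a*p.1+b*q.1+(a*p.2+b*q.2) := by ring
    linarith

lemma convex_upperTri (N k l : ℕ) : Convex ℝ (upperTri N k l) := by
  intro p hp q hq a b ha hb hab
  obtain ⟨h1, h2, h3⟩ := hp
  obtain ⟨h4, h5, h6⟩ := hq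
  refine ⟨?_, ?_, ?_⟩ <;>
    simp only [Prod.fst_add, Prod.snd_add, Prod.smul_fst, Prod.smul_snd, smul_eq_mul]
  · exact combo_ge ha hb hab h1 h4
  · exact combo_ge ha hb hab h2 h5
  · have h := combo_le ha hb hab h3 h6
    have h' : a*(p.1+p.2) + b*(q.1+q.2) = a*p.1+b*q.1+(a*p.2+b*q.2) := by ring
    linarith

lemma lower_sub_square {N k l : ℕ} (hN : 0 < (N:ℝ)) : lowerTri N k l ⊆ basicSquare N k l := by
  intro p ⟨h1, h2, h3⟩
  have e : ((k : ℝ) + l + 1) / N = ((k:ℝ)+1)/N + (l:ℝ)/N := by ring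
  have e2 : ((k : ℝ) + l + 1) / N = (k:ℝ)/N + ((l:ℝ)+1)/N := by ring
  exact ⟨⟨h1, by linarith⟩, ⟨h2, by linarith⟩⟩

lemma upper_sub_square {N k l : ℕ} (hN : 0 < (N:ℝ)) : upperTri N k l ⊆ basicSquare N k l := by
  intro p ⟨h1, h2, h3⟩
  have e : ((k : ℝ) + l + 1) / N = ((k:ℝ)+1)/N + (l:ℝ)/N := by ring
  have e2 : ((k : ℝ) + l + 1) / N = (k:ℝ)/N + ((l:ℝ)+1)/N := by ring
  exact ⟨⟨by linarith, h1⟩, ⟨by linarith, h2⟩⟩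

lemma square_sub_union (N k l : ℕ) : basicSquare N k l ⊆ lowerTri N k l ∪ upperTri N k l := by
  intro p ⟨⟨h1, h2⟩, ⟨h3, h4⟩⟩
  rcases le_total (p.1 + p.2) (((k : ℝ) + l + 1) / N) with h | h
  · exact Or.inl ⟨h1, h3, h⟩
  · exact Or.inr ⟨h2, h4, h⟩

lemma square_sub_unit {N k l : ℕ} (hk : k < N) (hl : l < N) :
    basicSquare N k l ⊆ Set.Icc (0:ℝ) 1 ×ˢ Set.Icc (0:ℝ) 1 := by
  have hn : (0:ℝ) < N := by exact_mod_cast Nat.zero_lt_of_lt hk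
  intro p ⟨⟨h1, h2⟩, ⟨h3, h4⟩⟩
  have hk1 : ((k:ℝ)+1) ≤ N := by exact_mod_cast Nat.succ_le_of_lt hk
  have hl1 : ((l:ℝ)+1) ≤ N := by exact_mod_cast Nat.succ_le_of_lt hl
  have hk0 : (0:ℝ) ≤ (k:ℝ)/N := by positivity
  have hl0 : (0:ℝ) ≤ (l:ℝ)/N := by positivity
  exact ⟨⟨le_trans hk0 h1, h2.trans ((div_le_one hn).2 hk1)⟩,
    ⟨le_trans hl0 h3, h4.trans ((div_le_one hn).2 hl1)⟩⟩

lemma combo_pos {c1 c2 c3 d1 d2 d3 : ℝ} (h1 : 0 ≤ c1) (h2 : 0 ≤ c2) (h3 : 0 ≤ c3)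
    (hs : c1 + c2 + c3 = 1) (hd1 : 0 < d1) (hd2 : 0 < d2) (hd3 : 0 < d3) :
    0 < c1*d1 + c2*d2 + c3*d3 := by
  have hc : 0 < c1 ∨ 0 < c2 ∨ 0 < c3 := by
    by_contra h; push_neg at h; linarith [h.1, h.2.1, h.2.2]
  rcases hc with h | h | h
  · nlinarith [mul_nonneg h2 hd2.le, mul_nonneg h3 hd3.le, mul_pos h hd1]
  · nlinarith [mul_nonneg h1 hd1.le, mul_nonneg h3 hd3.le, mul_pos h hd2]
  · nlinarith [mul_nonneg h1 hd1.le, mul_nonneg h2 hd2.le, mul_pos h hd3]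

lemma lower_lt {N : ℝ} (hN : 0 < N) {k l α β γ t x y : ℝ}
    (hx : k/N ≤ x) (hy : l/N ≤ y) (hxy : x + y ≤ (k+l+1)/N)
    (hA : t < α + β*(k/N) + γ*(l/N))
    (hB : t < α + β*((k+1)/N) + γ*(l/N))
    (hC : t < α + β*(k/N) + γ*((l+1)/N)) :
    t < α + β*x + γ*y := by
  have hN' : N ≠ 0 := ne_of_gt hN
  have hcB : (0:ℝ) ≤ N*x - k := by
    have := (div_le_iff₀ hN).mp hx; linarith
  have hcC : (0:ℝ) ≤ N*y - l := by
    have := (div_le_iff₀ hN).mp hy; linarith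
  have hcA : (0:ℝ) ≤ 1 - (N*x - k) - (N*y - l) := by
    have := (le_div_iff₀ hN).mp hxy; linarith
  have key : α + β*x + γ*y - t =
      (1 - (N*x-k) - (N*y-l))*((α + β*(k/N) + γ*(l/N)) - t)
      + (N*x-k)*((α + β*((k+1)/N) + γ*(l/N)) - t)
      + (N*y-l)*((α + β*(k/N) + γ*((l+1)/N)) - t) := by
    field_simp
    ring
  have h := combo_pos hcA hcB hcC (by ring) (sub_pos.2 hA) (sub_pos.2 hB) (sub_pos.2 hC)
  linarith [key, h]

lemma upper_lt {N : ℝ} (hN : 0 < N) {k l α β γ t x y : ℝ}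
    (hx : x ≤ (k+1)/N) (hy : y ≤ (l+1)/N) (hxy : (k+l+1)/N ≤ x + y)
    (hB : t < α + β*((k+1)/N) + γ*(l/N))
    (hC : t < α + β*(k/N) + γ*((l+1)/N))
    (hD : t < α + β*((k+1)/N) + γ*((l+1)/N)) :
    t < α + β*x + γ*y := by
  have hN' : N ≠ 0 := ne_of_gt hN
  have hcB : (0:ℝ) ≤ (l+1) - N*y := by
    have := (le_div_iff₀ hN).mp hy; linarith
  have hcC : (0:ℝ) ≤ (k+1) - N*x := by
    have := (le_div_iff₀ hN).mp hx; linarith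
  have hcD : (0:ℝ) ≤ N*(x+y) - (k+l+1) := by
    have := (div_le_iff₀ hN).mp hxy; linarith
  have key : α + β*x + γ*y - t =
      ((l+1) - N*y)*((α + β*((k+1)/N) + γ*(l/N)) - t)
      + ((k+1) - N*x)*((α + β*(k/N) + γ*((l+1)/N)) - t)
      + (N*(x+y) - (k+l+1))*((α + β*((k+1)/N) + γ*((l+1)/N)) - t) := by
    field_simp
    ring
  have h := combo_pos hcB hcC hcD (by ring) (sub_pos.2 hB) (sub_pos.2 hC) (sub_pos.2 hD)
  linarith [key, h]

lemma affine_eval (g : (ℝ×ℝ) →ᵃ[ℝ] (Fin 3 → ℝ)) (x y : ℝ) :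
    g (x, y) = g (0,0) + x • (g (1,0) - g (0,0)) + y • (g (0,1) - g (0,0)) := by
  have h1 : ∀ v : ℝ × ℝ, g v = g.linear v + g (0,0) := by
    intro v
    have := g.map_vadd ((0,0) : ℝ × ℝ) v
    simpa [Prod.mk_zero_zero] using this
  have h2 : g.linear (1,0) = g (1,0) - g (0,0) := by rw [h1 (1,0)]; abel
  have h3 : g.linear (0,1) = g (0,1) - g (0,0) := by rw [h1 (0,1)]; abel
  have h4 : ((x, y) : ℝ × ℝ) = x • ((1:ℝ),(0:ℝ)) + y • ((0:ℝ),(1:ℝ)) := by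
    simp [Prod.ext_iff]
  rw [h1 (x,y), h4, map_add, map_smul, map_smul, h2, h3]
  abel

lemma core {t : ℝ} {C : Set (ℝ×ℝ)} (hC : Convex ℝ C)
    {f : ℝ×ℝ → Fin 3 → ℝ} {g : (ℝ×ℝ) →ᵃ[ℝ] (Fin 3 → ℝ)}
    (hfg : ∀ p ∈ C, f p = g p) {p q : ℝ×ℝ} (hp : p ∈ C) (hq : q ∈ C)
    (hzL : f p ∈ leftHalf t) (hzR : f q ∈ rightHalf t) :
    ![t, (1-t)/2, (1-t)/2] ∈ f '' C := by
  obtain ⟨hLs, hL0, hL1⟩ := hzL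
  obtain ⟨hRs, hR0, hR1⟩ := hzR
  have hLsum : f p 0 + f p 1 + f p 2 = 1 := by
    have h := hLs.2; rw [Fin.sum_univ_three] at h; exact h
  have hRsum : f q 0 + f q 1 + f q 2 = 1 := by
    have h := hRs.2; rw [Fin.sum_univ_three] at h; exact h
  by_cases hd : f q 1 ≤ f p 1
  · have e1 : f p 1 = (1-t)/2 := le_antisymm hL1 (le_trans hR1 hd)
    refine ⟨p, hp, ?_⟩
    funext i; fin_cases i
    · exact hL0
    · exact e1
    · show f p 2 = (1-t)/2
      linarith
  · push_neg at hd
    set s := ((1-t)/2 - f p 1)/(f q 1 - f p 1) with hs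
    have hden : 0 < f q 1 - f p 1 := by linarith
    have hs0 : 0 ≤ s := div_nonneg (by linarith) hden.le
    have hs1 : s ≤ 1 := (div_le_one hden).2 (by linarith)
    have hkey : s * (f q 1 - f p 1) = (1-t)/2 - f p 1 := div_mul_cancel₀ _ hden.ne'
    have hmemC : (1-s) • p + s • q ∈ C := hC hp hq (by linarith) hs0 (by ring)
    have happ : g ((1-s) • p + s • q) = (1-s) • g p + s • g q :=
      Convex.combo_affine_apply (by ring)
    refine ⟨(1-s) • p + s • q, hmemC, ?_⟩
    rw [hfg _ hmemC, happ, ← hfg p hp, ← hfg q hq]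
    funext i
    fin_cases i
    · show (1-s) * f p 0 + s * f q 0 = t
      linear_combination (1-s)*hL0 + s*hR0
    · show (1-s) * f p 1 + s * f q 1 = (1-t)/2
      linear_combination hkey
    · show (1-s) * f p 2 + s * f q 2 = (1-t)/2
      linear_combination (1-s)*hLsum + s*hRsum - (1-s)*hL0 - s*hR0 - hkey

end Aux

/-- Lemma: a basic square whose boundary image meets both `L` and `R`
contains `ω` in its image. Fix `N ≥ 1`, `t ∈ (0,1)`, `ω = (t, (1−t)/2, (1−t)/2)`, and a
`T`-piecewise affine `f : [0,1]² → Δ²`, vertically monotone at every `x = k/N`, with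
`f₁(v) ≠ t` at every grid vertex. If `S` is a basic square such that `f(∂S)` intersects both
`L` and `R`, then `ω ∈ f(S)`. -/
theorem stmt11 (N : ℕ) (hN : 1 ≤ N) (t : ℝ) (ht : t ∈ Set.Ioo (0 : ℝ) 1)
    (f : ℝ × ℝ → Fin 3 → ℝ)
    (hpa : IsPWAffine N f)
    (hmem : ∀ p : ℝ × ℝ, p ∈ Set.Icc (0 : ℝ) 1 ×ˢ Set.Icc (0 : ℝ) 1 →
      f p ∈ stdSimplex ℝ (Fin 3))
    (hmono : ∀ k : ℕ, k ≤ N → ∀ y y' : ℝ, 0 ≤ y → y ≤ y' → y' ≤ 1 →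
      f ((k : ℝ) / N, y) 0 ≤ f ((k : ℝ) / N, y') 0)
    (hvne : ∀ k l : ℕ, k ≤ N → l ≤ N → f ((k : ℝ) / N, (l : ℝ) / N) 0 ≠ t)
    (k l : ℕ) (hk : k < N) (hl : l < N)
    (hL : (f '' frontier (basicSquare N k l) ∩ leftHalf t).Nonempty)
    (hR : (f '' frontier (basicSquare N k l) ∩ rightHalf t).Nonempty) :
    ![t, (1 - t) / 2, (1 - t) / 2] ∈ f '' basicSquare N k l := by
  have hn : (0:ℝ) < N := by exact_mod_cast hN
  have hn' : (N:ℝ) ≠ 0 := ne_of_gt hn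
  obtain ⟨⟨glow, hglow⟩, ⟨gup, hgup⟩⟩ := hpa k l hk hl
  -- extract the two boundary points
  obtain ⟨zL, ⟨pL, hpLf, rfl⟩, hzL⟩ := hL
  obtain ⟨zR, ⟨pR, hpRf, rfl⟩, hzR⟩ := hR
  have hclosed : IsClosed (basicSquare N k l) := (isClosed_Icc.prod isClosed_Icc)
  have hpLS : pL ∈ lowerTri N k l ∪ upperTri N k l :=
    square_sub_union N k l (hclosed.frontier_subset hpLf)
  have hpRS : pR ∈ lowerTri N k l ∪ upperTri N k l :=
    square_sub_union N k l (hclosed.frontier_subset hpRf)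
  -- basic arithmetic
  have h1N : (0:ℝ) ≤ 1/N := by positivity
  have ekl : ((k:ℝ)+l+1)/N = (k:ℝ)/N + (l:ℝ)/N + 1/N := by ring
  have ek1 : ((k:ℝ)+1)/N = (k:ℝ)/N + 1/N := by ring
  have el1 : ((l:ℝ)+1)/N = (l:ℝ)/N + 1/N := by ring
  have hlN : ((l:ℝ)+1) ≤ N := by exact_mod_cast Nat.succ_le_of_lt hl
  -- corner memberships
  have hAlow : ((k:ℝ)/N, (l:ℝ)/N) ∈ lowerTri N k l :=
    ⟨le_rfl, le_rfl, by rw [ekl]; show (k:ℝ)/N + (l:ℝ)/N ≤ _; linarith⟩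
  have hBlow : (((k:ℝ)+1)/N, (l:ℝ)/N) ∈ lowerTri N k l :=
    ⟨by rw [ek1]; show (k:ℝ)/N ≤ _; linarith, le_rfl,
     by rw [ekl, ek1]; show (k:ℝ)/N + 1/N + (l:ℝ)/N ≤ _; linarith⟩
  have hBup : (((k:ℝ)+1)/N, (l:ℝ)/N) ∈ upperTri N k l :=
    ⟨le_rfl, by rw [el1]; show (l:ℝ)/N ≤ _; linarith,
     by rw [ekl, ek1]; show _ ≤ (k:ℝ)/N + 1/N + (l:ℝ)/N; linarith⟩
  have hClow : ((k:ℝ)/N, ((l:ℝ)+1)/N) ∈ lowerTri N k l :=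
    ⟨le_rfl, by rw [el1]; show (l:ℝ)/N ≤ _; linarith,
     by rw [ekl, el1]; show (k:ℝ)/N + ((l:ℝ)/N + 1/N) ≤ _; linarith⟩
  have hCup : ((k:ℝ)/N, ((l:ℝ)+1)/N) ∈ upperTri N k l :=
    ⟨by rw [ek1]; show (k:ℝ)/N ≤ _; linarith, le_rfl,
     by rw [ekl, el1]; show _ ≤ (k:ℝ)/N + ((l:ℝ)/N + 1/N); linarith⟩
  have hDup : (((k:ℝ)+1)/N, ((l:ℝ)+1)/N) ∈ upperTri N k l :=
    ⟨le_rfl, le_rfl, by rw [ekl, ek1, el1]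
                        show _ ≤ (k:ℝ)/N + 1/N + ((l:ℝ)/N + 1/N); linarith⟩
  -- affine representations
  set αl := glow (0,0) 0 with hαl
  set βl := glow (1,0) 0 - glow (0,0) 0 with hβl
  set γl := glow (0,1) 0 - glow (0,0) 0 with hγl
  have evall : ∀ x y : ℝ, glow (x,y) 0 = αl + βl*x + γl*y := by
    intro x y
    rw [affine_eval glow x y]
    simp only [Pi.add_apply, Pi.smul_apply, Pi.sub_apply, smul_eq_mul]
    ring
  set αu := gup (0,0) 0 with hαu
  set βu := gup (1,0) 0 - gup (0,0) 0 with hβu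
  set γu := gup (0,1) 0 - gup (0,0) 0 with hγu
  have evalu : ∀ x y : ℝ, gup (x,y) 0 = αu + βu*x + γu*y := by
    intro x y
    rw [affine_eval gup x y]
    simp only [Pi.add_apply, Pi.smul_apply, Pi.sub_apply, smul_eq_mul]
    ring
  -- corner values
  have eaA : f ((k:ℝ)/N, (l:ℝ)/N) 0 = αl + βl*((k:ℝ)/N) + γl*((l:ℝ)/N) := by
    rw [hglow _ hAlow]; exact evall _ _
  have eaC : f ((k:ℝ)/N, ((l:ℝ)+1)/N) 0 = αl + βl*((k:ℝ)/N) + γl*(((l:ℝ)+1)/N) := by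
    rw [hglow _ hClow]; exact evall _ _
  have eaB : f (((k:ℝ)+1)/N, (l:ℝ)/N) 0 = αl + βl*(((k:ℝ)+1)/N) + γl*((l:ℝ)/N) := by
    rw [hglow _ hBlow]; exact evall _ _
  have euC : f ((k:ℝ)/N, ((l:ℝ)+1)/N) 0 = αu + βu*((k:ℝ)/N) + γu*(((l:ℝ)+1)/N) := by
    rw [hgup _ hCup]; exact evalu _ _
  have euB : f (((k:ℝ)+1)/N, (l:ℝ)/N) 0 = αu + βu*(((k:ℝ)+1)/N) + γu*((l:ℝ)/N) := by
    rw [hgup _ hBup]; exact evalu _ _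
  have euD : f (((k:ℝ)+1)/N, ((l:ℝ)+1)/N) 0 = αu + βu*(((k:ℝ)+1)/N) + γu*(((l:ℝ)+1)/N) := by
    rw [hgup _ hDup]; exact evalu _ _
  -- grid values ≠ t
  have ha_ne : f ((k:ℝ)/N, ((l:ℝ)+1)/N) 0 ≠ t := by
    have h := hvne k (l+1) hk.le (by omega); push_cast at h; exact h
  have hb_ne : f (((k:ℝ)+1)/N, (l:ℝ)/N) 0 ≠ t := by
    have h := hvne (k+1) l (by omega) hl.le; push_cast at h; exact h
  -- monotonicity facts
  have hy0 : (0:ℝ) ≤ (l:ℝ)/N := by positivity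
  have hyy : (l:ℝ)/N ≤ ((l:ℝ)+1)/N := by rw [el1]; linarith
  have hy1 : ((l:ℝ)+1)/N ≤ 1 := (div_le_one hn).2 hlN
  have hmA : f ((k:ℝ)/N, (l:ℝ)/N) 0 ≤ f ((k:ℝ)/N, ((l:ℝ)+1)/N) 0 :=
    hmono k hk.le _ _ hy0 hyy hy1
  have hmD : f (((k:ℝ)+1)/N, (l:ℝ)/N) 0 ≤ f (((k:ℝ)+1)/N, ((l:ℝ)+1)/N) 0 := by
    have h := hmono (k+1) (by omega) ((l:ℝ)/N) (((l:ℝ)+1)/N) hy0 hyy hy1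
    push_cast at h; exact h
  -- the diagonal case handler
  have hdiag : ∀ s : ℝ, 0 ≤ s → s ≤ 1 →
      s * (f (((k:ℝ)+1)/N, (l:ℝ)/N) 0 - f ((k:ℝ)/N, ((l:ℝ)+1)/N) 0)
        = t - f ((k:ℝ)/N, ((l:ℝ)+1)/N) 0 →
      ![t, (1 - t) / 2, (1 - t) / 2] ∈ f '' basicSquare N k l := by
    intro s hs0 hs1 hsb
    have hsN0 : (0:ℝ) ≤ s/N := div_nonneg hs0 hn.le
    have hsN1 : s/N ≤ 1/N := by gcongr
    set q : ℝ×ℝ := ((k:ℝ)/N + s/N, ((l:ℝ)+1)/N - s/N) with hq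
    have hqlow : q ∈ lowerTri N k l := by
      refine ⟨by show (k:ℝ)/N ≤ (k:ℝ)/N + s/N; linarith,
        by show (l:ℝ)/N ≤ ((l:ℝ)+1)/N - s/N; rw [el1]; linarith,
        le_of_eq ?_⟩
      show (k:ℝ)/N + s/N + (((l:ℝ)+1)/N - s/N) = _
      ring
    have hqup : q ∈ upperTri N k l := by
      refine ⟨by show (k:ℝ)/N + s/N ≤ ((k:ℝ)+1)/N; rw [ek1]; linarith,
        by show ((l:ℝ)+1)/N - s/N ≤ ((l:ℝ)+1)/N; linarith,
        le_of_eq ?_⟩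
      show _ = (k:ℝ)/N + s/N + (((l:ℝ)+1)/N - s/N)
      ring
    have hq0 : f q 0 = t := by
      have e1 : f q 0 = αl + βl*((k:ℝ)/N + s/N) + γl*(((l:ℝ)+1)/N - s/N) := by
        rw [hglow q hqlow]; exact evall _ _
      have e2 : f q 0 = f ((k:ℝ)/N, ((l:ℝ)+1)/N) 0
          + s * (f (((k:ℝ)+1)/N, (l:ℝ)/N) 0 - f ((k:ℝ)/N, ((l:ℝ)+1)/N) 0) := by
        rw [e1, eaC, eaB]; ring
      rw [e2, hsb]; ring
    have hqsimp : f q ∈ stdSimplex ℝ (Fin 3) :=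
      hmem q (square_sub_unit hk hl (lower_sub_square hn hqlow))
    rcases le_total (f q 1) ((1-t)/2) with hq1 | hq1
    · have hqL : f q ∈ leftHalf t := ⟨hqsimp, hq0, hq1⟩
      rcases hpRS with hR' | hR'
      · exact Set.image_mono (f := f) (lower_sub_square hn)
          (core (convex_lowerTri N k l) hglow hqlow hR' hqL hzR)
      · exact Set.image_mono (f := f) (upper_sub_square hn)
          (core (convex_upperTri N k l) hgup hqup hR' hqL hzR)
    · have hqR : f q ∈ rightHalf t := ⟨hqsimp, hq0, hq1⟩
      rcases hpLS with hL' | hL'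
      · exact Set.image_mono (f := f) (lower_sub_square hn)
          (core (convex_lowerTri N k l) hglow hL' hqlow hzL hqR)
      · exact Set.image_mono (f := f) (upper_sub_square hn)
          (core (convex_upperTri N k l) hgup hL' hqup hzL hqR)
  -- main case analysis on the diagonal corner values
  rcases ha_ne.lt_or_gt with hat | hat <;> rcases hb_ne.lt_or_gt with hbt | hbt
  · -- a < t, b < t : f < t on the lower triangle
    have hlowc : ∀ p ∈ lowerTri N k l, f p 0 < t := by
      intro p hp
      obtain ⟨hp1, hp2, hp3⟩ := hp
      have e := evall p.1 p.2
      rw [Prod.mk.eta] at e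
      have h := lower_lt (t := -t) (α := -αl) (β := -βl) (γ := -γl) hn hp1 hp2 hp3
        (by linarith [eaA, hmA]) (by linarith [eaB]) (by linarith [eaC])
      rw [hglow p ⟨hp1, hp2, hp3⟩, e]
      linarith
    have hpLup : pL ∈ upperTri N k l := by
      rcases hpLS with h | h
      · exact absurd hzL.2.1 (hlowc pL h).ne
      · exact h
    have hpRup : pR ∈ upperTri N k l := by
      rcases hpRS with h | h
      · exact absurd hzR.2.1 (hlowc pR h).ne
      · exact h
    exact Set.image_mono (f := f) (upper_sub_square hn)
      (core (convex_upperTri N k l) hgup hpLup hpRup hzL hzR)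
  · -- a < t < b : diagonal crossing
    refine hdiag ((t - f ((k:ℝ)/N, ((l:ℝ)+1)/N) 0) /
        (f (((k:ℝ)+1)/N, (l:ℝ)/N) 0 - f ((k:ℝ)/N, ((l:ℝ)+1)/N) 0))
      (div_nonneg (by linarith) (by linarith))
      ((div_le_one (by linarith)).2 (by linarith))
      (div_mul_cancel₀ _ (by intro h0; rw [sub_eq_zero] at h0; linarith))
  · -- b < t < a : diagonal crossing
    have hne : f ((k:ℝ)/N, ((l:ℝ)+1)/N) 0 - f (((k:ℝ)+1)/N, (l:ℝ)/N) 0 ≠ 0 := by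
      intro h0; rw [sub_eq_zero] at h0; linarith
    refine hdiag ((f ((k:ℝ)/N, ((l:ℝ)+1)/N) 0 - t) /
        (f ((k:ℝ)/N, ((l:ℝ)+1)/N) 0 - f (((k:ℝ)+1)/N, (l:ℝ)/N) 0))
      (div_nonneg (by linarith) (by linarith))
      ((div_le_one (by linarith)).2 (by linarith))
      ?_
    field_simp
    ring
  · -- t < a, t < b : f > t on the upper triangle
    have hupc : ∀ p ∈ upperTri N k l, t < f p 0 := by
      intro p hp
      obtain ⟨hp1, hp2, hp3⟩ := hp
      have e := evalu p.1 p.2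
      rw [Prod.mk.eta] at e
      have h := upper_lt (t := t) (α := αu) (β := βu) (γ := γu) hn hp1 hp2 hp3
        (by linarith [euB]) (by linarith [euC]) (by linarith [euD, hmD, euB])
      rw [hgup p ⟨hp1, hp2, hp3⟩, e]
      linarith
    have hpLlow : pL ∈ lowerTri N k l := by
      rcases hpLS with h | h
      · exact h
      · exact absurd hzL.2.1 (hupc pL h).ne'
    have hpRlow : pR ∈ lowerTri N k l := by
      rcases hpRS with h | h
      · exact h
      · exact absurd hzR.2.1 (hupc pR h).ne'
    exact Set.image_mono (f := f) (lower_sub_square hn)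
      (core (convex_lowerTri N k l) hglow hpLlow hpRlow hzL hzR)
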